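/- Every periodic equilibrium configuration is trivial: if (x_n)_{n∈ℤ} is an equilibrium configuration (for a strictly decreasing positive force F) and there exist p ∈ ℕ, p ≥ 1, and L > 0 with x_{n+p} = x_n + L for all n, then the gaps x_{k+1} - x_k are all equal. -/

import Mathlib

noncomputable def auxG2 (F : ℝ → ℝ) (L : ℝ) (t : ℝ) : ℝ := ∑' q : ℕ, F (q * L + t)

def auxB (x : ℤ → ℝ) (s : ℤ) (n : ℤ) : ℝ := x (n + s) - x n

noncomputable def auxD (F : ℝ → ℝ) (x : ℤ → ℝ) (L : ℝ) (p : ℕ) (k : ℤ) : ℝ :=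
  ∑ r ∈ Finset.range p, ∑ j ∈ Finset.range (r+1), auxG2 F L (auxB x ((r:ℤ)+1) (k - j))

section AuxAll
variable {F : ℝ → ℝ} {x : ℤ → ℝ} {p : ℕ} {L : ℝ}

lemma aux_xadd (hper : ∀ n : ℤ, x (n + (p : ℤ)) = x n + L) (a : ℤ) (q : ℕ) :
    x (a + q * p) = x a + q * L := by
  induction q with
  | zero => simp
  | succ q ih =>
    have : a + ((q+1 : ℕ) : ℤ) * p = (a + q * p) + p := by push_cast; ring
    rw [this, hper]
    push_cast
    rw [ih]; ring

lemma aux_xsub (hper : ∀ n : ℤ, x (n + (p : ℤ)) = x n + L) (a : ℤ) (q : ℕ) :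
    x (a - q * p) = x a - q * L := by
  have := aux_xadd hper (a - q * p) q
  have h2 : a - q * p + q * p = a := by ring
  rw [h2] at this
  linarith

/-- summability of the one-period-grouped series -/
lemma aux_Gsummable (hFpos : ∀ d, 0 < d → 0 < F d)
    (hFanti : ∀ a b, 0 < a → a < b → F b < F a)
    (hsumL : ∀ n : ℤ, Summable (fun k : {k : ℤ // k < n} => F (x n - x k.1)))
    (hp : 1 ≤ p) (hL : 0 < L)
    (hper : ∀ n : ℤ, x (n + (p : ℤ)) = x n + L)
    {t : ℝ} (ht : 0 < t) :
    Summable (fun q : ℕ => F (q * L + t)) := by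
  have hinj : Function.Injective (fun q : ℕ => (⟨-((q:ℤ)+1) * p, by
      have : (0:ℤ) < ((q:ℤ)+1) * p := by positivity
      linarith⟩ : {k : ℤ // k < 0})) := by
    intro a b hab
    simp only [Subtype.mk.injEq] at hab
    have hp' : (0:ℤ) < (p:ℤ) := by exact_mod_cast hp
    have h2 : ((a:ℤ)+1) * p = ((b:ℤ)+1) * p := by linarith
    have := mul_right_cancel₀ (by omega : (p:ℤ) ≠ 0) h2
    omega
  have hbase : Summable (fun q : ℕ => F ((q+1) * L)) := by
    have := (hsumL 0).comp_injective hinj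
    refine this.congr fun q => ?_
    simp only [Function.comp_apply]
    have : x (-((q:ℤ)+1) * p) = x 0 - (q+1) * L := by
      have := aux_xsub hper (0:ℤ) (q+1)
      rw [show (0:ℤ) - ((q+1:ℕ):ℤ) * p = -((q:ℤ)+1) * p by push_cast; ring] at this
      rw [this]; push_cast; ring
    rw [this]; ring_nf
  rw [← summable_nat_add_iff 1]
  refine Summable.of_nonneg_of_le (fun q => ?_) (fun q => ?_) hbase
  · exact le_of_lt (hFpos _ (by positivity))
  · have h1 : (0:ℝ) < ((q:ℝ)+1) * L := by positivity
    have := hFanti (((q:ℝ)+1) * L) (((q:ℝ)+1) * L + t) h1 (by linarith)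
    push_cast
    have e : ((q:ℝ)+1) * L + t = (q+1 : ℝ) * L + t := by ring
    nlinarith [this]


lemma aux_regroupL (hx : StrictMono x) (hp : 1 ≤ p) (hL : 0 < L) (n : ℤ)
    (hsum : Summable (fun k : {k : ℤ // k < n} => F (x n - x k.1)))
    (hSum2 : ∀ t : ℝ, 0 < t → Summable (fun q : ℕ => F (q * L + t)))
    (hper : ∀ m : ℤ, x (m + (p : ℤ)) = x m + L) :
    (∑' k : {k : ℤ // k < n}, F (x n - x k.1)) =
      ∑ r ∈ Finset.range p, auxG2 F L (x n - x (n - ((r:ℤ) + 1))) := by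
  haveI : NeZero p := ⟨by omega⟩
  -- equivalence ℕ ≃ {k // k < n}
  let e1 : ℕ ≃ {k : ℤ // k < n} :=
    { toFun := fun m => ⟨n - 1 - m, by omega⟩
      invFun := fun k => (n - 1 - k.1).toNat
      left_inv := by intro m; simp
      right_inv := by
        intro k
        have hk : (0:ℤ) ≤ n - 1 - k.1 := by have := k.2; omega
        ext
        simp [Int.toNat_of_nonneg hk] }
  have step1 : (∑' k : {k : ℤ // k < n}, F (x n - x k.1)) =
      ∑' m : ℕ, F (x n - x (n - 1 - m)) :=
    ((e1.tsum_eq (fun k : {k : ℤ // k < n} => F (x n - x k.1))).symm).trans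
      (tsum_congr fun m => rfl)
  -- key pointwise identity
  have key : ∀ (q r : ℕ), r < p →
      x n - x (n - 1 - ((q * p + r : ℕ) : ℤ)) = q * L + (x n - x (n - ((r:ℤ) + 1))) := by
    intro q r hr
    have h1 : n - 1 - ((q * p + r : ℕ) : ℤ) = (n - ((r:ℤ)+1)) - q * p := by push_cast; ring
    rw [h1, aux_xsub hper]
    ring
  have hs1 : Summable (fun m : ℕ => F (x n - x (n - 1 - m))) := by
    have := hsum.comp_injective e1.injective
    exact this.congr fun m => rfl
  let e2 : ℕ × Fin p ≃ ℕ := (Nat.divModEquiv p).symm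
  have he2 : ∀ z : ℕ × Fin p, (e2 z : ℕ) = z.1 * p + z.2 := by
    intro ⟨q, r⟩; rfl
  have step2 : (∑' m : ℕ, F (x n - x (n - 1 - m))) =
      ∑' z : ℕ × Fin p, F ((z.1 : ℝ) * L + (x n - x (n - ((z.2 : ℕ) : ℤ) - 1))) := by
    rw [← e2.tsum_eq (fun m : ℕ => F (x n - x (n - 1 - m)))]
    refine tsum_congr fun z => ?_
    rw [he2 z]
    have := key z.1 z.2 z.2.2
    rw [this]
    ring_nf
  have hpos : ∀ r : ℕ, (0:ℝ) < x n - x (n - (r:ℤ) - 1) := by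
    intro r
    have : n - (r:ℤ) - 1 < n := by omega
    have := hx this
    linarith
  have hs2 : Summable (fun z : ℕ × Fin p =>
      F ((z.1 : ℝ) * L + (x n - x (n - ((z.2 : ℕ) : ℤ) - 1)))) := by
    have h := hs1.comp_injective e2.injective
    refine h.congr fun z => ?_
    simp only [Function.comp_apply]
    rw [he2 z]
    have := key z.1 z.2 z.2.2
    rw [this]
    ring_nf
  have step3 : (∑' z : ℕ × Fin p, F ((z.1 : ℝ) * L + (x n - x (n - ((z.2 : ℕ) : ℤ) - 1)))) =
      ∑' q : ℕ, ∑ r : Fin p, F ((q : ℝ) * L + (x n - x (n - ((r : ℕ) : ℤ) - 1))) := by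
    rw [Summable.tsum_prod hs2]
    exact tsum_congr fun q => tsum_fintype _
  have step4 : (∑' q : ℕ, ∑ r : Fin p, F ((q : ℝ) * L + (x n - x (n - ((r : ℕ) : ℤ) - 1)))) =
      ∑ r : Fin p, ∑' q : ℕ, F ((q : ℝ) * L + (x n - x (n - ((r : ℕ) : ℤ) - 1))) := by
    refine Summable.tsum_finsetSum fun r _ => ?_
    exact hSum2 _ (hpos r)
  rw [step1, step2, step3, step4]
  rw [← Fin.sum_univ_eq_sum_range (fun r : ℕ => auxG2 F L (x n - x (n - ((r:ℤ) + 1))))]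
  refine Finset.sum_congr rfl fun r _ => ?_
  unfold auxG2
  refine tsum_congr fun q => ?_
  norm_num
  ring_nf

lemma aux_regroupR (hx : StrictMono x) (hp : 1 ≤ p) (n : ℤ)
    (hsum : Summable (fun k : {k : ℤ // n < k} => F (x k.1 - x n)))
    (hSum2 : ∀ t : ℝ, 0 < t → Summable (fun q : ℕ => F (q * L + t)))
    (hper : ∀ m : ℤ, x (m + (p : ℤ)) = x m + L) :
    (∑' k : {k : ℤ // n < k}, F (x k.1 - x n)) =
      ∑ r ∈ Finset.range p, auxG2 F L (x (n + ((r:ℤ) + 1)) - x n) := by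
  haveI : NeZero p := ⟨by omega⟩
  let e1 : ℕ ≃ {k : ℤ // n < k} :=
    { toFun := fun m => ⟨n + 1 + m, by omega⟩
      invFun := fun k => (k.1 - n - 1).toNat
      left_inv := by
        intro m
        simp only []
        omega
      right_inv := by
        intro k
        have hk : (0:ℤ) ≤ k.1 - n - 1 := by have := k.2; omega
        ext
        simp [Int.toNat_of_nonneg hk]
        omega }
  have step1 : (∑' k : {k : ℤ // n < k}, F (x k.1 - x n)) =
      ∑' m : ℕ, F (x (n + 1 + m) - x n) :=
    ((e1.tsum_eq (fun k : {k : ℤ // n < k} => F (x k.1 - x n))).symm).trans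
      (tsum_congr fun m => rfl)
  have key : ∀ (q r : ℕ), r < p →
      x (n + 1 + ((q * p + r : ℕ) : ℤ)) - x n = q * L + (x (n + ((r:ℤ) + 1)) - x n) := by
    intro q r hr
    have h1 : n + 1 + ((q * p + r : ℕ) : ℤ) = (n + ((r:ℤ)+1)) + q * p := by push_cast; ring
    rw [h1, aux_xadd hper]
    ring
  have hs1 : Summable (fun m : ℕ => F (x (n + 1 + m) - x n)) := by
    have := hsum.comp_injective e1.injective
    exact this.congr fun m => rfl
  let e2 : ℕ × Fin p ≃ ℕ := (Nat.divModEquiv p).symm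
  have he2 : ∀ z : ℕ × Fin p, (e2 z : ℕ) = z.1 * p + z.2 := by
    intro ⟨q, r⟩; rfl
  have hpos : ∀ r : ℕ, (0:ℝ) < x (n + (r:ℤ) + 1) - x n := by
    intro r
    have h : n < n + (r:ℤ) + 1 := by omega
    have := hx h
    linarith
  have step2 : (∑' m : ℕ, F (x (n + 1 + m) - x n)) =
      ∑' z : ℕ × Fin p, F ((z.1 : ℝ) * L + (x (n + ((z.2 : ℕ) : ℤ) + 1) - x n)) := by
    rw [← e2.tsum_eq (fun m : ℕ => F (x (n + 1 + m) - x n))]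
    refine tsum_congr fun z => ?_
    rw [he2 z]
    have := key z.1 z.2 z.2.2
    rw [this]
    ring_nf
  have hs2 : Summable (fun z : ℕ × Fin p =>
      F ((z.1 : ℝ) * L + (x (n + ((z.2 : ℕ) : ℤ) + 1) - x n))) := by
    have h := hs1.comp_injective e2.injective
    refine h.congr fun z => ?_
    simp only [Function.comp_apply]
    rw [he2 z]
    have := key z.1 z.2 z.2.2
    rw [this]
    ring_nf
  have step3 : (∑' z : ℕ × Fin p, F ((z.1 : ℝ) * L + (x (n + ((z.2 : ℕ) : ℤ) + 1) - x n))) =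
      ∑' q : ℕ, ∑ r : Fin p, F ((q : ℝ) * L + (x (n + ((r : ℕ) : ℤ) + 1) - x n)) := by
    rw [Summable.tsum_prod hs2]
    exact tsum_congr fun q => tsum_fintype _
  have step4 : (∑' q : ℕ, ∑ r : Fin p, F ((q : ℝ) * L + (x (n + ((r : ℕ) : ℤ) + 1) - x n))) =
      ∑ r : Fin p, ∑' q : ℕ, F ((q : ℝ) * L + (x (n + ((r : ℕ) : ℤ) + 1) - x n)) := by
    refine Summable.tsum_finsetSum fun r _ => ?_
    exact hSum2 _ (hpos r)
  rw [step1, step2, step3, step4]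
  rw [← Fin.sum_univ_eq_sum_range (fun r : ℕ => auxG2 F L (x (n + ((r:ℤ) + 1)) - x n))]
  refine Finset.sum_congr rfl fun r _ => ?_
  unfold auxG2
  refine tsum_congr fun q => ?_
  ring_nf

lemma aux_tele (m : ℕ) (a : ℤ) :
    ∑ i ∈ Finset.range m, auxB x 1 (a + i) = x (a + m) - x a := by
  induction m with
  | zero => simp
  | succ m ih =>
    rw [Finset.sum_range_succ, ih]
    unfold auxB
    have h1 : a + (m:ℤ) + 1 = a + ((m+1:ℕ):ℤ) := by push_cast; ring
    rw [h1]
    ring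

lemma aux_Bper (hper : ∀ n : ℤ, x (n + (p : ℤ)) = x n + L) (s m : ℤ) :
    auxB x s (m + p) = auxB x s m := by
  unfold auxB
  have h1 : m + (p:ℤ) + s = (m + s) + p := by ring
  rw [h1, hper, hper]
  ring

lemma aux_shift1 (h : ℤ → ℝ) (hh : ∀ m : ℤ, h (m + p) = h m) (a : ℤ) :
    ∑ i ∈ Finset.range p, h (a + 1 + i) = ∑ i ∈ Finset.range p, h (a + i) := by
  have e1 : ∑ i ∈ Finset.range (p+1), h (a + i) =
      ∑ i ∈ Finset.range p, h (a + i) + h (a + p) := by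
    rw [Finset.sum_range_succ]
  have e2 : ∑ i ∈ Finset.range (p+1), h (a + i) =
      h a + ∑ i ∈ Finset.range p, h (a + 1 + i) := by
    rw [Finset.sum_range_succ']
    simp only [Nat.cast_zero, add_zero, Nat.cast_add, Nat.cast_one]
    rw [add_comm (∑ i ∈ Finset.range p, h (a + ((i:ℤ) + 1)))]
    congr 1
    exact Finset.sum_congr rfl fun i _ => by ring_nf
  have e3 : h (a + p) = h a := hh a
  linarith
lemma aux_shiftd (h : ℤ → ℝ) (hh : ∀ m : ℤ, h (m + p) = h m) (d : ℕ) (a : ℤ) :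
    ∑ i ∈ Finset.range p, h (a + d + i) = ∑ i ∈ Finset.range p, h (a + i) := by
  induction d with
  | zero => simp
  | succ d ih =>
    have h1 : ∀ i : ℕ, a + ((d+1:ℕ):ℤ) + i = (a + d) + 1 + i := by intro i; push_cast; ring
    calc ∑ i ∈ Finset.range p, h (a + ((d+1:ℕ):ℤ) + i)
        = ∑ i ∈ Finset.range p, h ((a + d) + 1 + i) :=
          Finset.sum_congr rfl fun i _ => by rw [h1 i]
      _ = ∑ i ∈ Finset.range p, h ((a + d) + i) := aux_shift1 h hh (a + d)
      _ = ∑ i ∈ Finset.range p, h (a + i) := ih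

lemma aux_sumB (hper : ∀ n : ℤ, x (n + (p : ℤ)) = x n + L) (r : ℕ) (k : ℤ) :
    ∑ i ∈ Finset.range p, auxB x r (k + i) = r * L := by
  induction r with
  | zero => simp [auxB]
  | succ r ih =>
    have hsplit : ∀ n : ℤ, auxB x ((r+1:ℕ):ℤ) n = auxB x r n + auxB x 1 (n + r) := by
      intro n
      unfold auxB
      have : n + ((r+1:ℕ):ℤ) = n + (r:ℤ) + 1 := by push_cast; ring
      rw [this]
      ring
    have hgap : ∑ i ∈ Finset.range p, auxB x 1 ((k + i) + r) = L := by
      have hh : ∀ m : ℤ, auxB x 1 (m + p) = auxB x 1 m := fun m => aux_Bper hper 1 m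
      calc ∑ i ∈ Finset.range p, auxB x 1 ((k + i) + (r:ℤ))
          = ∑ i ∈ Finset.range p, auxB x 1 ((k + r) + i) :=
            Finset.sum_congr rfl fun i _ => by ring_nf
        _ = ∑ i ∈ Finset.range p, auxB x 1 ((k + r) + i) := rfl
        _ = L := by
            rw [aux_tele p (k + r)]
            have := hper (k + r)
            linarith
    calc ∑ i ∈ Finset.range p, auxB x ((r+1:ℕ):ℤ) (k + i)
        = ∑ i ∈ Finset.range p, (auxB x r (k + i) + auxB x 1 ((k + i) + r)) :=
          Finset.sum_congr rfl fun i _ => hsplit _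
      _ = (r:ℝ) * L + L := by rw [Finset.sum_add_distrib, ih, hgap]
      _ = ((r+1:ℕ):ℝ) * L := by push_cast; ring

lemma aux_Bdecomp (hp : 1 ≤ p) (r : ℕ) (n : ℤ) :
    auxB x ((r:ℤ)+1) n - ((r:ℝ)+1) * (L/p) =
      ∑ j ∈ Finset.range (r+1), (auxB x 1 (n + j) - L/p) := by
  rw [Finset.sum_sub_distrib]
  rw [aux_tele (r+1) n]
  simp only [Finset.sum_const, Finset.card_range, nsmul_eq_mul]
  unfold auxB
  have : n + ((r+1:ℕ):ℤ) = n + ((r:ℤ)+1) := by push_cast; ring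
  rw [this]
  push_cast
  ring


lemma aux_Ganti (hFanti : ∀ a b, 0 < a → a < b → F b < F a)
    (hSum2 : ∀ t : ℝ, 0 < t → Summable (fun q : ℕ => F (q * L + t)))
    (hL : 0 < L) {s t : ℝ} (hs : 0 < s) (hst : s < t) :
    auxG2 F L t < auxG2 F L s := by
  unfold auxG2
  refine Summable.tsum_lt_tsum (i := 0) (fun q => ?_) ?_ (hSum2 t (by linarith)) (hSum2 s hs)
  · have h1 : (0:ℝ) < (q:ℝ) * L + s := by positivity
    exact le_of_lt (hFanti _ _ h1 (by linarith))
  · simpa using hFanti s t hs hst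

lemma aux_Dstep
    (hstar : ∀ n : ℤ, ∑ r ∈ Finset.range p, auxG2 F L (auxB x ((r:ℤ)+1) (n - ((r:ℤ)+1))) =
      ∑ r ∈ Finset.range p, auxG2 F L (auxB x ((r:ℤ)+1) n)) (k : ℤ) :
    auxD F x L p k = auxD F x L p (k - 1) := by
  have key : ∀ r : ℕ,
      (∑ j ∈ Finset.range (r+1), auxG2 F L (auxB x ((r:ℤ)+1) (k - j)))
        + auxG2 F L (auxB x ((r:ℤ)+1) (k - ((r:ℤ)+1))) =
      (∑ j ∈ Finset.range (r+1), auxG2 F L (auxB x ((r:ℤ)+1) ((k-1) - j)))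
        + auxG2 F L (auxB x ((r:ℤ)+1) k) := by
    intro r
    have e1 : ∑ j ∈ Finset.range (r+2), auxG2 F L (auxB x ((r:ℤ)+1) (k - j)) =
        (∑ j ∈ Finset.range (r+1), auxG2 F L (auxB x ((r:ℤ)+1) (k - j)))
          + auxG2 F L (auxB x ((r:ℤ)+1) (k - ((r:ℤ)+1))) := by
      rw [Finset.sum_range_succ]
      norm_cast
    have e2 : ∑ j ∈ Finset.range (r+2), auxG2 F L (auxB x ((r:ℤ)+1) (k - j)) =
        (∑ j ∈ Finset.range (r+1), auxG2 F L (auxB x ((r:ℤ)+1) ((k-1) - j)))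
          + auxG2 F L (auxB x ((r:ℤ)+1) k) := by
      rw [Finset.sum_range_succ']
      simp only [Nat.cast_zero, sub_zero, Nat.cast_add, Nat.cast_one]
      congr 1
      refine Finset.sum_congr rfl fun j _ => ?_
      congr 2
      ring
    linarith [e1, e2]
  have hsum1 : auxD F x L p k
        + ∑ r ∈ Finset.range p, auxG2 F L (auxB x ((r:ℤ)+1) (k - ((r:ℤ)+1)))
      = auxD F x L p (k-1)
        + ∑ r ∈ Finset.range p, auxG2 F L (auxB x ((r:ℤ)+1) k) := by
    unfold auxD
    rw [← Finset.sum_add_distrib, ← Finset.sum_add_distrib]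
    exact Finset.sum_congr rfl fun r _ => key r
  have := hstar k
  linarith

lemma aux_Dconst
    (hstar : ∀ n : ℤ, ∑ r ∈ Finset.range p, auxG2 F L (auxB x ((r:ℤ)+1) (n - ((r:ℤ)+1))) =
      ∑ r ∈ Finset.range p, auxG2 F L (auxB x ((r:ℤ)+1) n)) (m : ℕ) (k : ℤ) :
    auxD F x L p (k + m) = auxD F x L p k := by
  induction m with
  | zero => simp
  | succ m ih =>
    have h1 : k + ((m+1:ℕ):ℤ) = (k + m + 1) := by push_cast; ring
    rw [h1]
    have := aux_Dstep hstar (k + m + 1)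
    rw [show k + (m:ℤ) + 1 - 1 = k + m by ring] at this
    rw [this, ih]


lemma aux_main (hx : StrictMono x) (hp : 1 ≤ p) (hL : 0 < L)
    (hper : ∀ n : ℤ, x (n + (p : ℤ)) = x n + L)
    (hSum2 : ∀ t : ℝ, 0 < t → Summable (fun q : ℕ => F (q * L + t)))
    (hGanti : ∀ s t : ℝ, 0 < s → s < t → auxG2 F L t < auxG2 F L s)
    (hstar : ∀ n : ℤ, ∑ r ∈ Finset.range p, auxG2 F L (auxB x ((r:ℤ)+1) (n - ((r:ℤ)+1))) =
      ∑ r ∈ Finset.range p, auxG2 F L (auxB x ((r:ℤ)+1) n))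
    (hDconst : ∀ (m : ℕ) (k : ℤ), auxD F x L p (k + m) = auxD F x L p k)
    (hsumB : ∀ (r : ℕ) (k : ℤ), ∑ i ∈ Finset.range p, auxB x r (k + i) = r * L)
    (hBdecomp : ∀ (r : ℕ) (n : ℤ), auxB x ((r:ℤ)+1) n - ((r:ℝ)+1) * (L/p) =
      ∑ j ∈ Finset.range (r+1), (auxB x 1 (n + j) - L/p))
    (hBper : ∀ s m : ℤ, auxB x s (m + p) = auxB x s m)
    (k : ℤ) : x (k + 1) - x k = L / p := by
  set c : ℝ := L / p with hc
  have hppos : (0:ℝ) < p := by exact_mod_cast hp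
  have hpc : (p:ℝ) * c = L := by rw [hc]; field_simp
  have hcpos : 0 < c := by positivity
  have hBpos : ∀ (r : ℕ) (n : ℤ), 0 < auxB x ((r:ℤ)+1) n := by
    intro r n
    have h : n < n + ((r:ℤ)+1) := by omega
    have := hx h
    unfold auxB
    linarith
  -- sum of auxB over a window
  have hsum_r : ∀ (r : ℕ) (a : ℤ),
      ∑ i ∈ Finset.range p, auxB x ((r:ℤ)+1) (a + i) = ((r:ℝ)+1) * L := by
    intro r a
    have := hsumB (r+1) a
    push_cast at this ⊢
    exact this
  -- the double sum T
  set T : ℝ := ∑ i ∈ Finset.range p, ∑ r ∈ Finset.range p,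
      (auxG2 F L (((r:ℝ)+1)*c) - auxG2 F L (auxB x ((r:ℤ)+1) (k+(i:ℤ)))) *
        (auxB x ((r:ℤ)+1) (k+(i:ℤ)) - ((r:ℝ)+1)*c) with hT
  -- Part 1
  have hT1 : ∑ i ∈ Finset.range p, ∑ r ∈ Finset.range p,
      auxG2 F L (((r:ℝ)+1)*c) * (auxB x ((r:ℤ)+1) (k+(i:ℤ)) - ((r:ℝ)+1)*c) = 0 := by
    rw [Finset.sum_comm]
    refine Finset.sum_eq_zero fun r _ => ?_
    rw [← Finset.mul_sum]
    have : ∑ i ∈ Finset.range p, (auxB x ((r:ℤ)+1) (k+(i:ℤ)) - ((r:ℝ)+1)*c) = 0 := by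
      rw [Finset.sum_sub_distrib, hsum_r r k]
      simp only [Finset.sum_const, Finset.card_range, nsmul_eq_mul]
      have : (p:ℝ) * (((r:ℝ)+1)*c) = ((r:ℝ)+1) * L := by rw [← hpc]; ring
      linarith
    rw [this, mul_zero]
  -- Part 2
  have hgapwin : ∑ i ∈ Finset.range p, (auxB x 1 (k+(i:ℤ)) - c) = 0 := by
    have := hsumB 1 k
    rw [Finset.sum_sub_distrib]
    simp only [Finset.sum_const, Finset.card_range, nsmul_eq_mul]
    push_cast at this
    rw [this]
    linarith [hpc]
  have hT2 : ∑ i ∈ Finset.range p, ∑ r ∈ Finset.range p,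
      auxG2 F L (auxB x ((r:ℤ)+1) (k+(i:ℤ))) * (auxB x ((r:ℤ)+1) (k+(i:ℤ)) - ((r:ℝ)+1)*c) = 0 := by
    have step1 : ∀ i ∈ Finset.range p, ∀ r ∈ Finset.range p,
        auxG2 F L (auxB x ((r:ℤ)+1) (k+(i:ℤ))) * (auxB x ((r:ℤ)+1) (k+(i:ℤ)) - ((r:ℝ)+1)*c) =
        ∑ j ∈ Finset.range (r+1),
          auxG2 F L (auxB x ((r:ℤ)+1) (k+(i:ℤ))) * (auxB x 1 ((k+(i:ℤ)) + j) - c) := by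
      intro i _ r _
      rw [hBdecomp r (k+(i:ℤ)), Finset.mul_sum]
    calc ∑ i ∈ Finset.range p, ∑ r ∈ Finset.range p,
        auxG2 F L (auxB x ((r:ℤ)+1) (k+(i:ℤ))) * (auxB x ((r:ℤ)+1) (k+(i:ℤ)) - ((r:ℝ)+1)*c)
        = ∑ i ∈ Finset.range p, ∑ r ∈ Finset.range p, ∑ j ∈ Finset.range (r+1),
            auxG2 F L (auxB x ((r:ℤ)+1) (k+(i:ℤ))) * (auxB x 1 ((k+(i:ℤ)) + j) - c) := by
          refine Finset.sum_congr rfl fun i hi => Finset.sum_congr rfl fun r hr => ?_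
          exact step1 i hi r hr
      _ = ∑ r ∈ Finset.range p, ∑ j ∈ Finset.range (r+1), ∑ i ∈ Finset.range p,
            auxG2 F L (auxB x ((r:ℤ)+1) (k+(i:ℤ))) * (auxB x 1 ((k+(i:ℤ)) + j) - c) := by
          rw [Finset.sum_comm]
          exact Finset.sum_congr rfl fun r _ => Finset.sum_comm
      _ = ∑ r ∈ Finset.range p, ∑ j ∈ Finset.range (r+1), ∑ i ∈ Finset.range p,
            auxG2 F L (auxB x ((r:ℤ)+1) ((k+(i:ℤ)) - j)) * (auxB x 1 (k+(i:ℤ)) - c) := by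
          refine Finset.sum_congr rfl fun r _ => Finset.sum_congr rfl fun j _ => ?_
          set h : ℤ → ℝ := fun m => auxG2 F L (auxB x ((r:ℤ)+1) (m - j)) * (auxB x 1 m - c) with hh
          have hper' : ∀ m : ℤ, h (m + p) = h m := by
            intro m
            simp only [hh]
            rw [show m + (p:ℤ) - j = (m - j) + p by ring, hBper, hBper]
          have shift := aux_shiftd h hper' j k
          calc ∑ i ∈ Finset.range p,
              auxG2 F L (auxB x ((r:ℤ)+1) (k+(i:ℤ))) * (auxB x 1 ((k+(i:ℤ)) + j) - c)
              = ∑ i ∈ Finset.range p, h (k + j + i) := by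
                refine Finset.sum_congr rfl fun i _ => ?_
                simp only [hh]
                rw [show k + (j:ℤ) + i - j = k + (i:ℤ) by ring,
                  show k + (j:ℤ) + (i:ℤ) = k + (i:ℤ) + j by ring]
            _ = ∑ i ∈ Finset.range p, h (k + i) := shift
            _ = ∑ i ∈ Finset.range p,
                auxG2 F L (auxB x ((r:ℤ)+1) ((k+(i:ℤ)) - j)) * (auxB x 1 (k+(i:ℤ)) - c) := rfl
      _ = ∑ i ∈ Finset.range p, (auxB x 1 (k+(i:ℤ)) - c) * auxD F x L p (k + (i:ℤ)) := by
          have hexp : ∀ i : ℕ, (auxB x 1 (k+(i:ℤ)) - c) * auxD F x L p (k + (i:ℤ))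
              = ∑ r ∈ Finset.range p, ∑ j ∈ Finset.range (r+1),
                  auxG2 F L (auxB x ((r:ℤ)+1) ((k+(i:ℤ)) - j)) * (auxB x 1 (k+(i:ℤ)) - c) := by
            intro i
            unfold auxD
            rw [Finset.mul_sum]
            refine Finset.sum_congr rfl fun r _ => ?_
            rw [Finset.mul_sum]
            exact Finset.sum_congr rfl fun j _ => by ring
          rw [Finset.sum_congr rfl (fun i _ => hexp i)]
          symm
          rw [Finset.sum_comm]
          exact Finset.sum_congr rfl fun r _ => Finset.sum_comm
      _ = ∑ i ∈ Finset.range p, (auxB x 1 (k+(i:ℤ)) - c) * auxD F x L p k := by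
          refine Finset.sum_congr rfl fun i _ => ?_
          rw [hDconst i k]
      _ = 0 := by
          rw [← Finset.sum_mul, hgapwin, zero_mul]
  -- T = 0
  have hT0 : ∑ i ∈ Finset.range p, ∑ r ∈ Finset.range p,
      (auxG2 F L (((r:ℝ)+1)*c) - auxG2 F L (auxB x ((r:ℤ)+1) (k+(i:ℤ)))) *
        (auxB x ((r:ℤ)+1) (k+(i:ℤ)) - ((r:ℝ)+1)*c) = 0 := by
    have hsplit : ∑ i ∈ Finset.range p, ∑ r ∈ Finset.range p,
        (auxG2 F L (((r:ℝ)+1)*c) - auxG2 F L (auxB x ((r:ℤ)+1) (k+(i:ℤ)))) *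
          (auxB x ((r:ℤ)+1) (k+(i:ℤ)) - ((r:ℝ)+1)*c)
        = (∑ i ∈ Finset.range p, ∑ r ∈ Finset.range p,
            auxG2 F L (((r:ℝ)+1)*c) * (auxB x ((r:ℤ)+1) (k+(i:ℤ)) - ((r:ℝ)+1)*c))
          - ∑ i ∈ Finset.range p, ∑ r ∈ Finset.range p,
            auxG2 F L (auxB x ((r:ℤ)+1) (k+(i:ℤ))) * (auxB x ((r:ℤ)+1) (k+(i:ℤ)) - ((r:ℝ)+1)*c) := by
      rw [← Finset.sum_sub_distrib]
      refine Finset.sum_congr rfl fun i _ => ?_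
      rw [← Finset.sum_sub_distrib]
      exact Finset.sum_congr rfl fun r _ => sub_mul _ _ _
    rw [hsplit, hT1, hT2, sub_zero]
  -- termwise nonneg
  have hterm : ∀ (r : ℕ) (n : ℤ), 0 ≤
      (auxG2 F L (((r:ℝ)+1)*c) - auxG2 F L (auxB x ((r:ℤ)+1) n)) *
        (auxB x ((r:ℤ)+1) n - ((r:ℝ)+1)*c) := by
    intro r n
    have hv : 0 < auxB x ((r:ℤ)+1) n := hBpos r n
    have hu : (0:ℝ) < ((r:ℝ)+1)*c := by positivity
    rcases lt_trichotomy (auxB x ((r:ℤ)+1) n) (((r:ℝ)+1)*c) with h|h|h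
    · have := hGanti _ _ hv h
      nlinarith
    · rw [h]; simp
    · have := hGanti _ _ hu h
      nlinarith
  have hmem : 0 ∈ Finset.range p := Finset.mem_range.2 (by omega)
  have hall := (Finset.sum_eq_zero_iff_of_nonneg
      (fun i _ => Finset.sum_nonneg fun r _ => hterm r _)).1 hT0 0 hmem
  have h00 := (Finset.sum_eq_zero_iff_of_nonneg (fun r _ => hterm r _)).1 hall 0 hmem
  norm_num at h00
  -- conclude
  have hfin : auxB x 1 k = c := by
    have hv : 0 < auxB x 1 k := by
      have := hBpos 0 k
      norm_num at this
      convert this using 2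
    rcases lt_trichotomy (auxB x 1 k) c with h|h|h
    · have := hGanti _ _ hv h
      rcases h00 with h0|h0 <;> linarith
    · exact h
    · have := hGanti _ _ hcpos h
      rcases h00 with h0|h0 <;> linarith
  have heq1 : auxB x 1 k = x (k + 1) - x k := rfl
  linarith [hfin, heq1]



lemma aux_star (hx : StrictMono x) (hp : 1 ≤ p) (hL : 0 < L)
    (hsumL : ∀ n : ℤ, Summable (fun k : {k : ℤ // k < n} => F (x n - x k.1)))
    (hsumR : ∀ n : ℤ, Summable (fun k : {k : ℤ // n < k} => F (x k.1 - x n)))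
    (heq : ∀ n : ℤ,
      (∑' k : {k : ℤ // k < n}, F (x n - x k.1)) =
      (∑' k : {k : ℤ // n < k}, F (x k.1 - x n)))
    (hSum2 : ∀ t : ℝ, 0 < t → Summable (fun q : ℕ => F (q * L + t)))
    (hper : ∀ m : ℤ, x (m + (p : ℤ)) = x m + L) (n : ℤ) :
    ∑ r ∈ Finset.range p, auxG2 F L (auxB x ((r:ℤ)+1) (n - ((r:ℤ)+1))) =
      ∑ r ∈ Finset.range p, auxG2 F L (auxB x ((r:ℤ)+1) n) := by
  have hl := aux_regroupL hx hp hL n (hsumL n) hSum2 hper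
  have hr := aux_regroupR hx hp n (hsumR n) hSum2 hper
  have h := heq n
  rw [hl, hr] at h
  calc ∑ r ∈ Finset.range p, auxG2 F L (auxB x ((r:ℤ)+1) (n - ((r:ℤ)+1)))
      = ∑ r ∈ Finset.range p, auxG2 F L (x n - x (n - ((r:ℤ) + 1))) := by
        refine Finset.sum_congr rfl fun r _ => ?_
        unfold auxB
        have h1 : n - ((r:ℤ)+1) + ((r:ℤ)+1) = n := by ring
        rw [h1]
    _ = ∑ r ∈ Finset.range p, auxG2 F L (x (n + ((r:ℤ) + 1)) - x n) := h
    _ = ∑ r ∈ Finset.range p, auxG2 F L (auxB x ((r:ℤ)+1) n) :=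
        Finset.sum_congr rfl fun r _ => rfl

end AuxAll

/-- Every periodic equilibrium configuration is trivial. -/
theorem stmt_2 (F : ℝ → ℝ)
    (hFpos : ∀ d, 0 < d → 0 < F d)
    (hFanti : ∀ a b, 0 < a → a < b → F b < F a)
    (x : ℤ → ℝ) (hx : StrictMono x)
    (hsumL : ∀ n : ℤ, Summable (fun k : {k : ℤ // k < n} => F (x n - x k.1)))
    (hsumR : ∀ n : ℤ, Summable (fun k : {k : ℤ // n < k} => F (x k.1 - x n)))
    (heq : ∀ n : ℤ,
      (∑' k : {k : ℤ // k < n}, F (x n - x k.1)) =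
      (∑' k : {k : ℤ // n < k}, F (x k.1 - x n)))
    (p : ℕ) (hp : 1 ≤ p) (L : ℝ) (hL : 0 < L)
    (hper : ∀ n : ℤ, x (n + (p : ℤ)) = x n + L) :
    ∀ k : ℤ, x (k + 1) - x k = x 1 - x 0 := by
  intro k
  have hSum2 : ∀ t : ℝ, 0 < t → Summable (fun q : ℕ => F (q * L + t)) :=
    fun t ht => aux_Gsummable hFpos hFanti hsumL hp hL hper ht
  have hGanti : ∀ s t : ℝ, 0 < s → s < t → auxG2 F L t < auxG2 F L s :=
    fun s t hs hst => aux_Ganti hFanti hSum2 hL hs hst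
  have hstar := aux_star hx hp hL hsumL hsumR heq hSum2 hper
  have hDconst := aux_Dconst hstar
  have hmain : ∀ m : ℤ, x (m + 1) - x m = L / p := fun m =>
    aux_main hx hp hL hper hSum2 hGanti hstar hDconst (aux_sumB hper)
      (fun r n => aux_Bdecomp hp r n) (fun s m => aux_Bper hper s m) m
  have h1 := hmain k
  have h2 := hmain 0
  norm_num at h2
  linarith
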